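/- Let K > 0, ε > 0, a > 0, b > 0, c ≥ 0, d ≥ 0, p ≥ 0, r ≥ 0, q > 0 with a ≥ c·K^q + ε and b·K^q ≥ d + ε. Then there exists a constant C > 0 (one may take C = ε·min(K^{−p−q}, K^{1−q−r})) such that for all u, v ≥ 0: (i) if u ≤ K·v then u^r v^p (a v^q − c u^q) ≥ C · min(u, K·v)^{p+q+r}; and (ii) if u ≥ K·v then K · v^r u^p (b u^q − d v^q) ≥ C · min(u, K·v)^{p+q+r}. -/
import Mathlib


/-- pointwise algebraic estimate giving
`f(u,v) ≥ C Z^{p+q+r}` on `{u ≤ Kv}` and `K g(u,v) ≥ C Z^{p+q+r}` on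
`{u ≥ Kv}`, where `Z = min(u, Kv)`, when `a ≥ cK^q + ε` and `bK^q ≥ d + ε`. -/
theorem stmt_11 (K ε a b c d p q r : ℝ) (hK : 0 < K) (hε : 0 < ε)
    (ha : 0 < a) (hb : 0 < b) (hc : 0 ≤ c) (hd : 0 ≤ d)
    (hp : 0 ≤ p) (hr : 0 ≤ r) (hq : 0 < q)
    (hacK : c * K ^ q + ε ≤ a) (hbKd : d + ε ≤ b * K ^ q) :
    ∃ C : ℝ, 0 < C ∧ ∀ u v : ℝ, 0 ≤ u → 0 ≤ v →
      (u ≤ K * v →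
        C * min u (K * v) ^ (p + q + r) ≤
          u ^ r * v ^ p * (a * v ^ q - c * u ^ q)) ∧
      (K * v ≤ u →
        C * min u (K * v) ^ (p + q + r) ≤
          K * (v ^ r * u ^ p * (b * u ^ q - d * v ^ q))) := by
  have hpqr : p + q + r ≠ 0 := by positivity
  refine ⟨min (ε * K ^ (-(p + q))) (ε * K ^ (1 - q - r)),
    lt_min (by positivity) (by positivity), ?_⟩
  intro u v hu hv
  constructor
  · -- case u ≤ K v
    intro huv
    rw [min_eq_left huv]
    have hsub : ε * v ^ q ≤ a * v ^ q - c * u ^ q := by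
      have h1 : c * u ^ q ≤ c * K ^ q * v ^ q := by
        calc c * u ^ q ≤ c * (K * v) ^ q :=
              mul_le_mul_of_nonneg_left (Real.rpow_le_rpow hu huv hq.le) hc
          _ = c * K ^ q * v ^ q := by rw [Real.mul_rpow hK.le hv]; ring
      have h2 : (c * K ^ q + ε) * v ^ q ≤ a * v ^ q :=
        mul_le_mul_of_nonneg_right hacK (Real.rpow_nonneg hv q)
      nlinarith
    rcases eq_or_lt_of_le hu with h0 | hupos
    · obtain rfl : u = 0 := h0.symm
      rw [Real.zero_rpow hpqr, mul_zero]
      have h3 : 0 ≤ a * v ^ q - c * (0:ℝ) ^ q := by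
        have := Real.rpow_nonneg hv q
        nlinarith
      exact mul_nonneg (mul_nonneg (Real.rpow_nonneg le_rfl r)
        (Real.rpow_nonneg hv p)) h3
    · have hKv : 0 < K * v := lt_of_lt_of_le hupos huv
      have hv' : 0 < v := by nlinarith
      have hKK : K ^ (-(p + q)) * K ^ (p + q) = 1 := by
        rw [← Real.rpow_add hK, show -(p+q) + (p+q) = 0 by ring, Real.rpow_zero]
      calc min (ε * K ^ (-(p + q))) (ε * K ^ (1 - q - r)) * u ^ (p + q + r)
          ≤ ε * K ^ (-(p + q)) * u ^ (p + q + r) :=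
            mul_le_mul_of_nonneg_right (min_le_left _ _) (Real.rpow_nonneg hu _)
        _ = ε * K ^ (-(p + q)) * (u ^ r * u ^ (p + q)) := by
            rw [show p + q + r = r + (p + q) by ring, Real.rpow_add hupos]
        _ ≤ ε * K ^ (-(p + q)) * (u ^ r * (K ^ (p + q) * v ^ (p + q))) := by
            have h4 : u ^ (p + q) ≤ K ^ (p + q) * v ^ (p + q) := by
              rw [← Real.mul_rpow hK.le hv]
              exact Real.rpow_le_rpow hu huv (by positivity)
            have h5 : u ^ r * u ^ (p+q) ≤ u ^ r * (K ^ (p + q) * v ^ (p + q)) :=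
              mul_le_mul_of_nonneg_left h4 (Real.rpow_nonneg hu r)
            exact mul_le_mul_of_nonneg_left h5 (by positivity)
        _ = ε * (u ^ r * v ^ (p + q)) := by
            linear_combination ε * u ^ r * v ^ (p + q) * hKK
        _ = u ^ r * v ^ p * (ε * v ^ q) := by
            rw [Real.rpow_add hv']; ring
        _ ≤ u ^ r * v ^ p * (a * v ^ q - c * u ^ q) :=
            mul_le_mul_of_nonneg_left hsub
              (mul_nonneg (Real.rpow_nonneg hu r) (Real.rpow_nonneg hv p))
  · -- case K v ≤ u
    intro hKvu
    rw [min_eq_right hKvu]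
    rcases eq_or_lt_of_le hv with h0 | hvpos
    · obtain rfl : v = 0 := h0.symm
      rw [mul_zero, Real.zero_rpow hpqr, mul_zero]
      have hq0 : (0:ℝ) ^ q = 0 := Real.zero_rpow hq.ne'
      have h3 : 0 ≤ b * u ^ q - d * (0:ℝ) ^ q := by
        rw [hq0]
        have := Real.rpow_nonneg hu q
        nlinarith
      exact mul_nonneg hK.le (mul_nonneg (mul_nonneg (Real.rpow_nonneg le_rfl r)
        (Real.rpow_nonneg hu p)) h3)
    · have hu' : 0 < u := lt_of_lt_of_le (by positivity) hKvu
      have hKK : K ^ (-q) * K ^ q = 1 := by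
        rw [← Real.rpow_add hK, show -q + q = 0 by ring, Real.rpow_zero]
      have hsub : ε * K ^ (-q) * u ^ q ≤ b * u ^ q - d * v ^ q := by
        have h1 : K ^ q * v ^ q ≤ u ^ q := by
          rw [← Real.mul_rpow hK.le hv]
          exact Real.rpow_le_rpow (by positivity) hKvu hq.le
        have h2 : d * v ^ q ≤ d * K ^ (-q) * u ^ q := by
          have h2a : d * K ^ (-q) * (K ^ q * v ^ q) ≤ d * K ^ (-q) * u ^ q :=
            mul_le_mul_of_nonneg_left h1
              (mul_nonneg hd (Real.rpow_nonneg hK.le _))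
          have h2b : d * v ^ q = d * K ^ (-q) * (K ^ q * v ^ q) := by
            linear_combination (-(d * v ^ q)) * hKK
          linarith [h2b ▸ h2a]
        have h3 : (d + ε) * K ^ (-q) * u ^ q ≤ b * u ^ q := by
          have h3a : (d + ε) * (K ^ (-q) * u ^ q) ≤ b * K ^ q * (K ^ (-q) * u ^ q) :=
            mul_le_mul_of_nonneg_right hbKd
              (mul_nonneg (Real.rpow_nonneg hK.le _) (Real.rpow_nonneg hu q))
          have h3b : b * K ^ q * (K ^ (-q) * u ^ q) = b * u ^ q := by
            linear_combination b * u ^ q * hKK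
          linarith [h3b ▸ h3a]
        nlinarith [Real.rpow_nonneg hu q]
      have hKK2 : K ^ (1 - q - r) * K ^ (r + (p + q)) = K ^ (1 - q) * K ^ (p + q) := by
        rw [← Real.rpow_add hK, ← Real.rpow_add hK,
          show 1 - q - r + (r + (p + q)) = 1 - q + (p + q) by ring]
      calc min (ε * K ^ (-(p + q))) (ε * K ^ (1 - q - r)) * (K * v) ^ (p + q + r)
          ≤ ε * K ^ (1 - q - r) * (K * v) ^ (p + q + r) :=
            mul_le_mul_of_nonneg_right (min_le_right _ _)
              (Real.rpow_nonneg (by positivity) _)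
        _ = ε * K ^ (1 - q) * (v ^ r * (K ^ (p + q) * v ^ (p + q))) := by
            rw [Real.mul_rpow hK.le hv,
              show p + q + r = r + (p + q) by ring, Real.rpow_add hvpos]
            linear_combination ε * (v ^ r * v ^ (p + q)) * hKK2
        _ ≤ ε * K ^ (1 - q) * (v ^ r * u ^ (p + q)) := by
            have h4 : K ^ (p + q) * v ^ (p + q) ≤ u ^ (p + q) := by
              rw [← Real.mul_rpow hK.le hv]
              exact Real.rpow_le_rpow (by positivity) hKvu (by positivity)
            have h5 : v ^ r * (K ^ (p + q) * v ^ (p + q)) ≤ v ^ r * u ^ (p + q) :=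
              mul_le_mul_of_nonneg_left h4 (Real.rpow_nonneg hv r)
            exact mul_le_mul_of_nonneg_left h5 (by positivity)
        _ = K * (v ^ r * u ^ p * (ε * K ^ (-q) * u ^ q)) := by
            rw [Real.rpow_add hu', show (1:ℝ) - q = 1 + -q by ring, Real.rpow_add hK,
              Real.rpow_one]
            ring
        _ ≤ K * (v ^ r * u ^ p * (b * u ^ q - d * v ^ q)) := by
            have h6 : v ^ r * u ^ p * (ε * K ^ (-q) * u ^ q) ≤
                v ^ r * u ^ p * (b * u ^ q - d * v ^ q) :=
              mul_le_mul_of_nonneg_left hsub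
                (mul_nonneg (Real.rpow_nonneg hv r) (Real.rpow_nonneg hu p))
            exact mul_le_mul_of_nonneg_left h6 hK.le
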